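/- Let U ⊆ ℂ ∖ ((−∞,0] ∪ {0}) be open, F : U → ℂ holomorphic, R > 0, and set Z_m(c) = (1/2π)(c − c·log c + F(c)), Z_e(c) = −i·c (principal branch of log). Fix ζ ∈ ℂ, ζ ≠ 0. On the tangent space ℂ × ℝ × ℝ (vectors w = (w_c, w_m, w_e)) at a point with base coordinate c ∈ U, define the ℂ-valued linear forms ℓ_m(w) = (iπR/ζ)·Z_m′(c)·w_c − i·w_m − iπRζ·conj(Z_m′(c)·w_c) and ℓ_e(w) = (iπR/ζ)·Z_e′(c)·w_c + i·w_e − iπRζ·conj(Z_e′(c)·w_c), the ℂ-valued 2-form Ω(u,v) = [Z_m′(c)u_c·v_e − Z_m′(c)v_c·u_e] + [Z_e′(c)u_c·v_m − Z_e′(c)v_c·u_m], and the real 2-form ω(u,v) = πR·Re[ Z_m′(c)u_c·conj(Z_e′(c)v_c) − Z_m′(c)v_c·conj(Z_e′(c)u_c) ] + (1/2πR)·(u_m v_e − v_m u_e). Then for all u, v: (1/2πR)·( ℓ_m(u)·ℓ_e(v) − ℓ_m(v)·ℓ_e(u) ) = −(1/(2ζ))·Ω(u,v) + ω(u,v) +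 (ζ/2)·conj(Ω(u,v)). -/

import Mathlib

set_option maxHeartbeats 1000000 in
theorem gmn_aux (P r ζ zm ze u1 v1 czm cze cu cv m m' e e' : ℂ)
    (hP : P ≠ 0) (hr : r ≠ 0) (hζ : ζ ≠ 0) :
    1 / (2 * P * r) *
      (-((P * r / ζ * (zm * u1) - m - P * r * ζ * (czm * cu)) *
            (P * r / ζ * (ze * v1) + e' - P * r * ζ * (cze * cv))) -
        -((P * r / ζ * (zm * v1) - m' - P * r * ζ * (czm * cv)) *
            (P * r / ζ * (ze * u1) + e - P * r * ζ * (cze * cu)))) =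
    -(1 / (2 * ζ)) * (zm * u1 * e' - zm * v1 * e + (ze * u1 * m' - ze * v1 * m)) +
      (P * r * ((zm * u1 * (cze * cv) - zm * v1 * (cze * cu) +
            (czm * cu * (ze * v1) - czm * cv * (ze * u1))) / 2) +
        1 / (2 * P * r) * (m * e' - m' * e)) +
      ζ / 2 * (czm * cu * e' - czm * cv * e + (cze * cu * m' - cze * cv * m)) := by
  have hζζ : ζ * ζ ≠ 0 := mul_ne_zero hζ hζ
  have h2Pr : (2 : ℂ) * P * r ≠ 0 := by
    exact mul_ne_zero (mul_ne_zero two_ne_zero hP) hr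
  have h1 : P * r / ζ * (zm * u1) - m - P * r * ζ * (czm * cu)
      = (P * r * (zm * u1) - ζ * m - P * r * ζ ^ 2 * (czm * cu)) / ζ := by
    field_simp
  have h2 : P * r / ζ * (zm * v1) - m' - P * r * ζ * (czm * cv)
      = (P * r * (zm * v1) - ζ * m' - P * r * ζ ^ 2 * (czm * cv)) / ζ := by
    field_simp
  have h3 : P * r / ζ * (ze * u1) + e - P * r * ζ * (cze * cu)
      = (P * r * (ze * u1) + ζ * e - P * r * ζ ^ 2 * (cze * cu)) / ζ := by
    field_simp
  have h4 : P * r / ζ * (ze * v1) + e' - P * r * ζ * (cze * cv)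
      = (P * r * (ze * v1) + ζ * e' - P * r * ζ ^ 2 * (cze * cv)) / ζ := by
    field_simp
  rw [h1, h2, h3, h4, div_mul_div_comm, div_mul_div_comm,
    ← neg_div, ← neg_div, ← sub_div, ← mul_div_assoc, div_eq_iff hζζ,
    one_div, inv_mul_eq_div, div_eq_iff h2Pr]
  field_simp
  ring

/-- Lemma 6.1, GMN: with the logarithmic differentials `ℓ_m, ℓ_e` of the
semi-flat holomorphic Darboux coordinates at `c ∈ U`, one has
`(1/2πR)(ℓ_m∧ℓ_e) = −Ω/(2ζ) + ω + (ζ/2)Ω̄`. -/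
theorem stmt19 (U : Set ℂ) (hU : IsOpen U) (hUs : U ⊆ Complex.slitPlane)
    (F : ℂ → ℂ) (hF : DifferentiableOn ℂ F U) (R : ℝ) (hR : 0 < R)
    (Zm Ze : ℂ → ℂ)
    (hZm : ∀ c : ℂ, Zm c = ((1 / (2 * Real.pi) : ℝ) : ℂ) * (c - c * Complex.log c + F c))
    (hZe : ∀ c : ℂ, Ze c = -Complex.I * c)
    (ζ : ℂ) (hζ : ζ ≠ 0) (c : ℂ) (hc : c ∈ U)
    (ℓm ℓe : ℂ × ℝ × ℝ → ℂ)
    (hℓm : ∀ w : ℂ × ℝ × ℝ, ℓm w =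
      (Complex.I * (Real.pi : ℂ) * (R : ℂ) / ζ) * (deriv Zm c * w.1)
        - Complex.I * (w.2.1 : ℂ)
        - Complex.I * (Real.pi : ℂ) * (R : ℂ) * ζ * (starRingEnd ℂ) (deriv Zm c * w.1))
    (hℓe : ∀ w : ℂ × ℝ × ℝ, ℓe w =
      (Complex.I * (Real.pi : ℂ) * (R : ℂ) / ζ) * (deriv Ze c * w.1)
        + Complex.I * (w.2.2 : ℂ)
        - Complex.I * (Real.pi : ℂ) * (R : ℂ) * ζ * (starRingEnd ℂ) (deriv Ze c * w.1))
    (Ω : ℂ × ℝ × ℝ → ℂ × ℝ × ℝ → ℂ)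
    (hΩ : ∀ u v : ℂ × ℝ × ℝ, Ω u v =
      (deriv Zm c * u.1 * (v.2.2 : ℂ) - deriv Zm c * v.1 * (u.2.2 : ℂ))
        + (deriv Ze c * u.1 * (v.2.1 : ℂ) - deriv Ze c * v.1 * (u.2.1 : ℂ)))
    (ω : ℂ × ℝ × ℝ → ℂ × ℝ × ℝ → ℝ)
    (hω : ∀ u v : ℂ × ℝ × ℝ, ω u v =
      Real.pi * R * (deriv Zm c * u.1 * (starRingEnd ℂ) (deriv Ze c * v.1)
        - deriv Zm c * v.1 * (starRingEnd ℂ) (deriv Ze c * u.1)).re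
        + (1 / (2 * Real.pi * R)) * (u.2.1 * v.2.2 - v.2.1 * u.2.2)) :
    ∀ u v : ℂ × ℝ × ℝ,
      ((1 / (2 * Real.pi * R) : ℝ) : ℂ) * (ℓm u * ℓe v - ℓm v * ℓe u)
        = -(1 / (2 * ζ)) * Ω u v + ((ω u v : ℝ) : ℂ) + (ζ / 2) * (starRingEnd ℂ) (Ω u v) := by
  intro u v
  have hre : ∀ z : ℂ, ((z.re : ℝ) : ℂ) = (z + (starRingEnd ℂ) z) / 2 := fun z => by
    rw [Complex.add_conj]; push_cast; ring
  have hπ : (Real.pi : ℂ) ≠ 0 := by exact_mod_cast Real.pi_ne_zero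
  have hRc : (R : ℂ) ≠ 0 := by exact_mod_cast hR.ne'
  have hm : ∀ w : ℂ × ℝ × ℝ, ℓm w = Complex.I *
      ((Real.pi : ℂ) * (R : ℂ) / ζ * (deriv Zm c * w.1) - (w.2.1 : ℂ)
        - (Real.pi : ℂ) * (R : ℂ) * ζ * (starRingEnd ℂ) (deriv Zm c * w.1)) := by
    intro w; rw [hℓm]; ring
  have he : ∀ w : ℂ × ℝ × ℝ, ℓe w = Complex.I *
      ((Real.pi : ℂ) * (R : ℂ) / ζ * (deriv Ze c * w.1) + (w.2.2 : ℂ)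
        - (Real.pi : ℂ) * (R : ℂ) * ζ * (starRingEnd ℂ) (deriv Ze c * w.1)) := by
    intro w; rw [hℓe]; ring
  have hII : ∀ p q : ℂ, (Complex.I * p) * (Complex.I * q) = -(p * q) := by
    intro p q
    calc (Complex.I * p) * (Complex.I * q) = (Complex.I * Complex.I) * (p * q) := by ring
    _ = -(p * q) := by rw [Complex.I_mul_I]; ring
  rw [hm, hm, he, he, hII, hII, hΩ, hω]
  push_cast
  rw [hre]
  simp only [map_add, map_sub, map_mul, Complex.conj_conj, Complex.conj_ofReal]
  exact gmn_aux (Real.pi : ℂ) (R : ℂ) ζ (deriv Zm c) (deriv Ze c) u.1 v.1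
    ((starRingEnd ℂ) (deriv Zm c)) ((starRingEnd ℂ) (deriv Ze c))
    ((starRingEnd ℂ) u.1) ((starRingEnd ℂ) v.1)
    (u.2.1 : ℂ) (v.2.1 : ℂ) (u.2.2 : ℂ) (v.2.2 : ℂ) hπ hRc hζ
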